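/- arXiv:1111.1224 — 5 statements merged into one kernel-verified Lean document; each statement's English description precedes it below -/
import Mathlib

section
/- Let f ∈ F_q[x] have degree d > 0. For each i ≥ 1, let N_i be the number of tuples (x_1, ..., x_i) ∈ F_q^i with f(x_1) = f(x_2) = ... = f(x_i). Then |V_f| = Σ_{i=1}^d (−1)^{i−1} N_i σ_i(1, 1/2, ..., 1/d), where σ_i is the i-th elementary symmetric polynomial in d variables evaluated at (1, 1/2, ..., 1/d) in the rationals, and the equality is between the natural number |V_f| cast into the rationals and the rational-valued right-hand side. -/
open Polynomial Finset

lemma gen_esymm (s : Multiset ℚ) (t : ℚ) :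
    (s.map fun r => 1 + t * r).prod = ∑ j ∈ Finset.range (Multiset.card s + 1), t ^ j * s.esymm j := by
  have h := congrArg (Polynomial.eval 1) (Multiset.prod_X_add_C_eq_sum_esymm (s.map fun r => t * r))
  rw [Polynomial.eval_multiset_prod, Multiset.map_map, Multiset.map_map] at h
  simp only [Function.comp, eval_add, eval_X, eval_C, eval_finset_sum, eval_mul, eval_pow,
    one_pow, mul_one, Multiset.card_map] at h
  rw [h]
  refine Finset.sum_congr rfl fun j _ => ?_
  have := Multiset.pow_smul_esymm t j s
  simp only [smul_eq_mul] at this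
  rw [← this]

lemma key_identity (d m : ℕ) (hm : 1 ≤ m) (hmd : m ≤ d) :
    ∑ i ∈ Finset.Icc 1 d, (-1:ℚ)^(i-1) * (m:ℚ)^i *
      (((Multiset.range d).map fun j => (1 : ℚ) / (j + 1)).esymm i) = 1 := by
  set s : Multiset ℚ := (Multiset.range d).map fun j => (1:ℚ)/(j+1) with hs
  have hm0 : (m:ℚ) ≠ 0 := by
    exact_mod_cast Nat.one_le_iff_ne_zero.mp hm
  have hmem : (1:ℚ)/m ∈ s := by
    rw [hs]
    simp only [Multiset.mem_map, Multiset.pure_def, Multiset.bind_def, bind,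
      Multiset.bind_singleton, Multiset.mem_range]
    refine ⟨((m - 1 : ℕ) : ℚ), ⟨m - 1, by omega, rfl⟩, ?_⟩
    rw [Nat.cast_sub hm]
    push_cast
    field_simp
    simp [hm0]
  have hprod : (s.map fun r => 1 + (-(m:ℚ)) * r).prod = 0 := by
    apply Multiset.prod_eq_zero
    refine Multiset.mem_map.mpr ⟨(1:ℚ)/m, hmem, ?_⟩
    field_simp
    ring
  have h := gen_esymm s (-(m:ℚ))
  rw [hprod] at h
  have hcard : Multiset.card s = d := by simp [hs]
  rw [hcard, Finset.sum_range_succ'] at h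
  have he0 : s.esymm 0 = 1 := by simp [Multiset.esymm]
  rw [he0] at h
  simp only [pow_zero, one_mul] at h
  have hsum : ∑ i ∈ Finset.range d, (-(m:ℚ))^(i+1) * s.esymm (i+1) = -1 := by linarith
  rw [← Finset.Ico_add_one_right_eq_Icc, Finset.sum_Ico_eq_sum_range]
  calc ∑ i ∈ Finset.range d, (-1:ℚ)^(1+i-1) * (m:ℚ)^(1+i) * s.esymm (1+i)
      = -∑ i ∈ Finset.range d, (-(m:ℚ))^(i+1) * s.esymm (i+1) := by
        rw [← Finset.sum_neg_distrib]
        refine Finset.sum_congr rfl fun i _ => ?_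
        have h1 : 1 + i - 1 = i := by omega
        have h2 : 1 + i = i + 1 := by omega
        rw [h1, h2, neg_pow (m:ℚ), pow_succ (-1:ℚ)]
        ring
    _ = 1 := by rw [hsum]; norm_num

lemma fiber_count (F : Type*) [Field F] [Fintype F] [DecidableEq F] (f : F[X]) (i : ℕ)
    (hi : 1 ≤ i) :
    (((Finset.univ : Finset (Fin i → F)).filter
        (fun x => ∀ j j', f.eval (x j) = f.eval (x j'))).card : ℕ)
      = ∑ v ∈ Finset.univ.image (fun a => f.eval a),
          (Finset.univ.filter fun a => f.eval a = v).card ^ i := by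
  have hset : ((Finset.univ : Finset (Fin i → F)).filter
        (fun x => ∀ j j', f.eval (x j) = f.eval (x j')))
      = (Finset.univ.image (fun a => f.eval a)).biUnion
          (fun v => Fintype.piFinset fun _ : Fin i => Finset.univ.filter fun a => f.eval a = v) := by
    ext x
    simp only [Finset.mem_filter, Finset.mem_univ, true_and, Finset.mem_biUnion,
      Finset.mem_image, Fintype.mem_piFinset]
    constructor
    · intro h
      exact ⟨f.eval (x ⟨0, hi⟩), ⟨x ⟨0, hi⟩, rfl⟩, fun j => h j ⟨0, hi⟩⟩
    · rintro ⟨v, _, hv⟩ j j'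
      rw [hv j, hv j']
  rw [hset, Finset.card_biUnion]
  · refine Finset.sum_congr rfl fun v _ => ?_
    rw [Fintype.card_piFinset]
    simp
  · intro v hv w hw hvw
    refine Finset.disjoint_left.mpr fun x hx hx' => hvw ?_
    simp only [Fintype.mem_piFinset, Finset.mem_filter, Finset.mem_univ, true_and] at hx hx'
    rw [← hx ⟨0, hi⟩, ← hx' ⟨0, hi⟩]

lemma fiber_card_le (F : Type*) [Field F] [Fintype F] [DecidableEq F] (f : F[X])
    (hd : 0 < f.natDegree) (v : F) :
    (Finset.univ.filter fun a => f.eval a = v).card ≤ f.natDegree := by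
  have hne : f - C v ≠ 0 := by
    intro h
    have : f = C v := by linear_combination (norm := ring_nf) h
    rw [this, natDegree_C] at hd
    exact lt_irrefl 0 hd
  calc (Finset.univ.filter fun a => f.eval a = v).card
      ≤ (f - C v).roots.toFinset.card := by
        apply Finset.card_le_card
        intro a ha
        simp only [Finset.mem_filter, Finset.mem_univ, true_and] at ha
        rw [Multiset.mem_toFinset, mem_roots hne]
        simp [IsRoot, ha]
    _ ≤ Multiset.card (f - C v).roots := Multiset.toFinset_card_le _
    _ ≤ (f - C v).natDegree := card_roots' _
    _ = f.natDegree := natDegree_sub_C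

theorem value_set_card_eq_alternating_sum (F : Type*) [Field F] [Fintype F] [DecidableEq F]
    (f : F[X]) (hd : 0 < f.natDegree) :
    ((Finset.univ.image fun a => f.eval a).card : ℚ) =
      ∑ i ∈ Finset.Icc 1 f.natDegree,
        (-1 : ℚ) ^ (i - 1) *
          (((Finset.univ : Finset (Fin i → F)).filter
              (fun x => ∀ j j', f.eval (x j) = f.eval (x j'))).card : ℚ) *
          (((Multiset.range f.natDegree).map fun j => (1 : ℚ) / (j + 1)).esymm i) := by
  classical
  set d := f.natDegree with hdd
  set V := Finset.univ.image fun a => f.eval a with hV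
  have hlow : ∀ v ∈ V, 1 ≤ (Finset.univ.filter fun a => f.eval a = v).card := by
    intro v hv
    rw [hV, Finset.mem_image] at hv
    obtain ⟨a, _, ha⟩ := hv
    exact Finset.card_pos.mpr ⟨a, Finset.mem_filter.mpr ⟨Finset.mem_univ a, ha⟩⟩
  calc (V.card : ℚ) = ∑ v ∈ V, (1 : ℚ) := by rw [Finset.sum_const, nsmul_eq_mul, mul_one]
    _ = ∑ v ∈ V, ∑ i ∈ Finset.Icc 1 d, (-1 : ℚ) ^ (i - 1) *
          ((Finset.univ.filter fun a => f.eval a = v).card : ℚ) ^ i *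
          (((Multiset.range d).map fun j => (1 : ℚ) / (j + 1)).esymm i) := by
        refine Finset.sum_congr rfl fun v hv => ?_
        exact (key_identity d _ (hlow v hv) (fiber_card_le F f hd v)).symm
    _ = ∑ i ∈ Finset.Icc 1 d, ∑ v ∈ V, (-1 : ℚ) ^ (i - 1) *
          ((Finset.univ.filter fun a => f.eval a = v).card : ℚ) ^ i *
          (((Multiset.range d).map fun j => (1 : ℚ) / (j + 1)).esymm i) := Finset.sum_comm
    _ = _ := by
        refine Finset.sum_congr rfl fun i hi => ?_
        have hi1 : 1 ≤ i := (Finset.mem_Icc.mp hi).1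
        have hcast : ((((Finset.univ : Finset (Fin i → F)).filter
              (fun x => ∀ j j', f.eval (x j) = f.eval (x j'))).card : ℚ))
            = ∑ v ∈ V, ((Finset.univ.filter fun a => f.eval a = v).card : ℚ) ^ i := by
          rw [fiber_count F f i hi1]
          push_cast
          rfl
        rw [hcast, Finset.mul_sum, Finset.sum_mul]
end

section
/- If t < (log₂ p)/3 and p/2^t > t(3+√p), and the pattern-count hypothesis from the Weil bound holds, then the map x ↦ (α(x), α(x+1), ..., α(x+t−1)) from F_p to {0,1}^t is surjective, where α(x) = (x^{(p−1)/2} + x^{p−1})/2. -/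
open Finset

theorem alpha_shift_map_surjective (p : ℕ) [Fact p.Prime] (hp2 : p ≠ 2) (t : ℕ) (ht : 0 < t)
    (hweil : ∀ b : Fin t → ℤ, (∀ i, b i = 1 ∨ b i = -1) →
      (p : ℝ) / 2 ^ t - t * (3 + Real.sqrt p) <
        ((Finset.univ.filter fun x : ZMod p =>
            ∀ i : Fin t, quadraticChar (ZMod p) (x + ((i : ℕ) : ZMod p)) = b i).card : ℝ))
    (htlog : (t : ℝ) < Real.logb 2 p / 3)
    (hpos : 0 < (p : ℝ) / 2 ^ t - t * (3 + Real.sqrt p)) :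
    ∀ c : Fin t → ZMod p, (∀ i, c i = 0 ∨ c i = 1) →
      ∃ x : ZMod p, ∀ i : Fin t,
        ((x + ((i : ℕ) : ZMod p)) ^ ((p - 1) / 2) + (x + ((i : ℕ) : ZMod p)) ^ (p - 1)) / 2 =
          c i := by
  intro c hc
  have hpp : p.Prime := Fact.out
  have hodd : Odd p := hpp.odd_of_ne_two hp2
  have hchar : ringChar (ZMod p) ≠ 2 := by
    rw [ZMod.ringChar_zmod_n]; exact hp2
  set b : Fin t → ℤ := fun i => if c i = 0 then -1 else 1 with hb
  have hb1 : ∀ i, b i = 1 ∨ b i = -1 := by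
    intro i; by_cases h : c i = 0 <;> simp [hb, h]
  have hcard := (hweil b hb1).trans_le' hpos.le
  have hne : (Finset.univ.filter fun x : ZMod p =>
      ∀ i : Fin t, quadraticChar (ZMod p) (x + ((i : ℕ) : ZMod p)) = b i).Nonempty := by
    rw [← Finset.card_pos]
    exact_mod_cast Nat.cast_pos.mp (by exact_mod_cast hcard)
  obtain ⟨x, hx⟩ := hne
  rw [Finset.mem_filter] at hx
  refine ⟨x, fun i => ?_⟩
  set y : ZMod p := x + ((i : ℕ) : ZMod p)
  have hχ : quadraticChar (ZMod p) y = b i := hx.2 i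
  have hy0 : y ≠ 0 := by
    intro h
    rw [h, quadraticChar_zero] at hχ
    rcases hb1 i with h1 | h1 <;> rw [h1] at hχ <;> norm_num at hχ
  have hcardF : Fintype.card (ZMod p) = p := ZMod.card p
  have hdiv : Fintype.card (ZMod p) / 2 = (p - 1) / 2 := by
    rw [hcardF]
    have h1 : p % 2 = 1 := Nat.odd_iff.mp hodd
    omega
  have hpow : (y : ZMod p) ^ ((p - 1) / 2) = ((b i : ℤ) : ZMod p) := by
    rw [← hχ, ← hdiv]
    exact (quadraticChar_eq_pow_of_char_ne_two' hchar y).symm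
  have hpow2 : (y : ZMod p) ^ (p - 1) = 1 := ZMod.pow_card_sub_one_eq_one hy0
  have h2 : (2 : ZMod p) ≠ 0 := by
    have : ((2 : ℕ) : ZMod p) ≠ 0 := by
      rw [Ne, ZMod.natCast_eq_zero_iff]
      exact fun h => hp2 ((Nat.prime_dvd_prime_iff_eq hpp Nat.prime_two).mp h)
    simpa using this
  rw [hpow, hpow2]
  rcases hc i with h0 | h1
  · rw [h0]
    simp [hb, h0]
  · have hc0 : c i ≠ 0 := by
      rw [h1]; exact one_ne_zero
    rw [h1]
    have : b i = 1 := by simp [hb, hc0]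
    rw [this]
    push_cast
    rw [one_add_one_eq_two, div_self h2]
end

section
/- Suppose for t natural numbers a_1, ..., a_t and b with b ≤ Σ a_i, and an odd prime p > Σ_{i=1}^t a_i, the polynomial map β : F_p → F_p defined by β(x) = Σ_{i=0}^{t−1} a_{i+1} α(x+i) − b (with a_i and b reduced mod p) has a root in F_p, where α(x) = (x^{(p−1)/2} + x^{p−1})/2. Then there exists a subset T ⊆ {1,...,t} with Σ_{i∈T} a_i = b. -/
open Finset

lemma alpha_zero_or_one (p : ℕ) [Fact p.Prime] (hp2 : p ≠ 2) (y : ZMod p) :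
    (y ^ ((p - 1) / 2) + y ^ (p - 1)) / 2 = 0 ∨
    (y ^ ((p - 1) / 2) + y ^ (p - 1)) / 2 = 1 := by
  have hpp : p.Prime := Fact.out
  have hp3 : 3 ≤ p := by
    rcases hpp.two_le.lt_or_eq with h | h
    · omega
    · omega
  have h2 : (2 : ZMod p) ≠ 0 := by
    intro h
    have : (p : ℕ) ∣ 2 := by
      have := (ZMod.natCast_eq_zero_iff 2 p).mp (by exact_mod_cast h)
      exact this
    have := Nat.le_of_dvd (by norm_num) this
    omega
  by_cases hy : y = 0
  · left
    subst hy
    rw [zero_pow (by omega), zero_pow (by omega)]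
    simp
  · have h1 : y ^ (p - 1) = 1 := ZMod.pow_card_sub_one_eq_one hy
    have hev : Even (p - 1) := Nat.Odd.sub_odd (hpp.odd_of_ne_two hp2) odd_one
    have hdm : (p - 1) / 2 * 2 = p - 1 := Nat.div_mul_cancel hev.two_dvd
    set z := y ^ ((p - 1) / 2) with hz
    have hsq : z ^ 2 = 1 := by
      rw [hz, ← pow_mul, hdm, h1]
    have hfac : (z - 1) * (z + 1) = 0 := by
      have : (z - 1) * (z + 1) = z ^ 2 - 1 := by ring
      rw [this, hsq, sub_self]
    rcases mul_eq_zero.mp hfac with h | h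
    · right
      have hz1 : z = 1 := by linear_combination h
      rw [hz1, h1]
      rw [show (1 : ZMod p) + 1 = 2 by norm_num, div_self h2]
    · left
      have hz1 : z = -1 := by linear_combination h
      rw [hz1, h1]
      simp

theorem root_of_beta_gives_subset_sum (p : ℕ) [Fact p.Prime] (hp2 : p ≠ 2)
    (t : ℕ) (a : Fin t → ℕ) (b : ℕ) (hb : b ≤ ∑ i, a i) (hp : ∑ i, a i < p)
    (hroot : ∃ x : ZMod p,
      (∑ i : Fin t, (a i : ZMod p) *
          (((x + ((i : ℕ) : ZMod p)) ^ ((p - 1) / 2) +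
              (x + ((i : ℕ) : ZMod p)) ^ (p - 1)) / 2)) - (b : ZMod p) = 0) :
    ∃ T : Finset (Fin t), ∑ i ∈ T, a i = b := by
  classical
  obtain ⟨x, hx⟩ := hroot
  set g : Fin t → ZMod p := fun i =>
    (((x + ((i : ℕ) : ZMod p)) ^ ((p - 1) / 2) +
        (x + ((i : ℕ) : ZMod p)) ^ (p - 1)) / 2) with hg
  have hg01 : ∀ i, g i = 0 ∨ g i = 1 := fun i =>
    alpha_zero_or_one p hp2 (x + ((i : ℕ) : ZMod p))
  set f : Fin t → ℕ := fun i => if g i = 1 then 1 else 0 with hf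
  have hgf : ∀ i, g i = (f i : ZMod p) := by
    intro i
    rcases hg01 i with h | h
    · simp only [hf]
      rw [h]
      have h10 : (1 : ZMod p) ≠ 0 := one_ne_zero
      rw [if_neg (by rw [h] at *; intro hc; exact h10 hc.symm)]
      simp
    · simp [hf, h]
  have hsum : ((∑ i, a i * f i : ℕ) : ZMod p) = (b : ZMod p) := by
    push_cast
    have : ∑ i : Fin t, (a i : ZMod p) * g i = (b : ZMod p) := by
      have := sub_eq_zero.mp hx
      simpa [hg] using this
    calc ∑ i : Fin t, (a i : ZMod p) * (f i : ZMod p)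
        = ∑ i : Fin t, (a i : ZMod p) * g i := by
          refine Finset.sum_congr rfl fun i _ => ?_
          rw [hgf i]
      _ = (b : ZMod p) := this
  have hfle : ∀ i, f i ≤ 1 := by
    intro i; simp only [hf]; split <;> omega
  have hle : ∑ i, a i * f i ≤ ∑ i, a i := by
    apply Finset.sum_le_sum
    intro i _
    calc a i * f i ≤ a i * 1 := Nat.mul_le_mul_left _ (hfle i)
      _ = a i := by ring
  have heq : ∑ i, a i * f i = b := by
    have h1 := congrArg ZMod.val hsum
    rwa [ZMod.val_cast_of_lt (by omega), ZMod.val_cast_of_lt (by omega)] at h1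
  refine ⟨univ.filter (fun i => f i = 1), ?_⟩
  rw [Finset.sum_filter, ← heq]
  refine Finset.sum_congr rfl fun i _ => ?_
  simp only [hf]
  split <;> simp
end

section
/- Let φ : {0,1}^n → Fin m (a 3SAT instance with n variables and m clauses, m ≥ 1, given as clause evaluation functions C_1, ..., C_m : {0,1}^n → Bool). Define G : {0,1}^n × F_2^m → {0,1}^n × F_2^m by G(x, y) = (x, w) where w_i = y_i + y_{i+1 mod m} if C_i(x) is true and w_i = y_i otherwise. Then for each fixed x, the map y ↦ w is F_2-linear, and it has rank m−1 if all clauses C_i(x) are satisfied and rank m (is bijective) otherwise. -/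
theorem clause_circuit_linear_rank (n m : ℕ) [NeZero m]
    (C : Fin m → (Fin n → Bool) → Bool) (x : Fin n → Bool) :
    ∃ L : (Fin m → ZMod 2) →ₗ[ZMod 2] (Fin m → ZMod 2),
      (∀ y i, L y i = if C i x then y i + y (i + 1) else y i) ∧
      ((∀ i, C i x = true) → Module.finrank (ZMod 2) (LinearMap.range L) = m - 1) ∧
      ((∃ i, C i x = false) → Function.Bijective L) := by
  set L : (Fin m → ZMod 2) →ₗ[ZMod 2] (Fin m → ZMod 2) :=
    { toFun := fun y i => if C i x then y i + y (i + 1) else y i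
      map_add' := by
        intro y z; funext i; simp only [Pi.add_apply]; split <;> ring
      map_smul' := by
        intro c y; funext i; simp only [Pi.smul_apply, smul_eq_mul, RingHom.id_apply]
        split <;> ring } with hLdef
  have hL : ∀ y i, L y i = if C i x then y i + y (i + 1) else y i := fun y i => rfl
  refine ⟨L, hL, ?_, ?_⟩
  · -- all clauses satisfied: rank m - 1
    intro hall
    have hker : LinearMap.ker L = Submodule.span (ZMod 2) {(fun _ => 1 : Fin m → ZMod 2)} := by
      apply le_antisymm
      · intro y hy
        have hy' : ∀ i, y (i + 1) = y i := by
          intro i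
          have := congrFun (LinearMap.mem_ker.mp hy) i
          rw [hL] at this
          simp only [hall i, if_true, Pi.zero_apply] at this
          have : y (i + 1) = -(y i) := by linear_combination this
          simpa [CharTwo.neg_eq] using this
        open scoped Fin.NatCast Fin.CommRing in
        have key : ∀ k : ℕ, y ((0 : Fin m) + k) = y 0 := by
          intro k
          induction k with
          | zero => simp
          | succ k ih =>
            have : ((0 : Fin m) + (k + 1 : ℕ)) = ((0 : Fin m) + k) + 1 := by
              push_cast; ring
            rw [this, hy', ih]
        have : y = y 0 • (fun _ => 1 : Fin m → ZMod 2) := by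
          funext i
          have : y i = y 0 := by
            have := key i.val
            simpa [Fin.cast_val_eq_self] using this
          simp [this]
        rw [this]
        exact Submodule.smul_mem _ _ (Submodule.mem_span_singleton_self _)
      · rw [Submodule.span_le, Set.singleton_subset_iff]
        refine LinearMap.mem_ker.mpr ?_
        funext i
        rw [hL]
        rw [if_pos (hall i)]
        show (1 : ZMod 2) + 1 = 0
        decide
    have hone : (fun _ => 1 : Fin m → ZMod 2) ≠ 0 := by
      intro h
      have := congrFun h ⟨0, Nat.pos_of_ne_zero (NeZero.ne m)⟩
      simpa using this
    have hkerdim : Module.finrank (ZMod 2) (LinearMap.ker L) = 1 := by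
      rw [hker]; exact finrank_span_singleton hone
    have hrn := LinearMap.finrank_range_add_finrank_ker L
    rw [hkerdim] at hrn
    have hdom : Module.finrank (ZMod 2) (Fin m → ZMod 2) = m := by
      simp
    omega
  · -- some clause unsatisfied: bijective
    rintro ⟨i0, hi0⟩
    have hinj : Function.Injective L := by
      rw [← LinearMap.ker_eq_bot]
      rw [LinearMap.ker_eq_bot']
      intro y hy
      have hy' : ∀ i, (if C i x then y i + y (i + 1) else y i) = 0 := by
        intro i
        have := congrFun hy i
        rwa [hL] at this
      open scoped Fin.NatCast Fin.CommRing in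
      have key : ∀ k : ℕ, y (i0 - (k : Fin m)) = 0 := by
        intro k
        induction k with
        | zero =>
          have := hy' i0
          simpa [hi0] using this
        | succ k ih =>
          have heq : (i0 - ((k : ℕ) + 1 : ℕ) : Fin m) = (i0 - (k : ℕ)) - 1 := by
            push_cast; ring
          rw [heq]
          set j : Fin m := (i0 - (k : ℕ)) - 1 with hj
          have hj1 : j + 1 = i0 - (k : ℕ) := by rw [hj]; ring
          have := hy' j
          by_cases hc : C j x
          · rw [if_pos hc, hj1, ih] at this
            linear_combination this
          · rwa [if_neg hc] at this
      funext i
      have := key (i0 - i).val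
      simpa [Fin.cast_val_eq_self] using this
    exact ⟨hinj, (LinearMap.injective_iff_surjective).mp hinj⟩
end

section
/- With G as above, if M is the number of x ∈ {0,1}^n satisfying all clauses (C_i(x) = true for all i), then the cardinality of the image of G equals 2^{n+m} − 2^{m−1} M. In particular, G is a bijection if and only if M = 0. -/
open Finset

lemma zmod2_add_self : ∀ a : ZMod 2, a + a = 0 := by decide

lemma zmod2_add_eq_zero : ∀ {a b : ZMod 2}, a + b = 0 → a = b := by decide

lemma upd_invol (m : ℕ) [NeZero m] (w : Fin m → ZMod 2) :
    Function.update (Function.update w 0 (w 0 + 1)) 0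
      ((Function.update w 0 (w 0 + 1)) 0 + 1) = w := by
  simp only [Function.update_self, Function.update_idem]
  have h : ∀ a : ZMod 2, a + 1 + 1 = a := by decide
  rw [h]
  exact Function.update_eq_self _ _

lemma card_sum_zero (m : ℕ) [NeZero m] :
    (Finset.univ.filter fun w : Fin m → ZMod 2 => ∑ i, w i = 0).card = 2 ^ (m - 1) := by
  have hsum : ∀ w : Fin m → ZMod 2,
      ∑ i, Function.update w 0 (w 0 + 1) i = (∑ i, w i) + 1 := by
    intro w
    rw [Finset.sum_update_of_mem (Finset.mem_univ 0)]
    rw [← Finset.sum_erase_add _ _ (Finset.mem_univ 0)]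
    have : Finset.univ \ {(0 : Fin m)} = Finset.univ.erase 0 := by
      ext j; simp [Finset.mem_erase, and_comm]
    rw [this]; ring
  have hcards : (Finset.univ.filter fun w : Fin m → ZMod 2 => ∑ i, w i = 0).card
      = (Finset.univ.filter fun w : Fin m → ZMod 2 => ¬ (∑ i, w i = 0)).card := by
    refine Finset.card_bij' (fun w _ => Function.update w 0 (w 0 + 1))
      (fun w _ => Function.update w 0 (w 0 + 1)) ?hi ?hj ?li ?ri
    case li => intro w _; exact upd_invol m w
    case ri => intro w _; exact upd_invol m w
    · intro w hw
      rw [Finset.mem_filter] at hw ⊢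
      refine ⟨Finset.mem_univ _, ?_⟩
      rw [hsum, hw.2]
      decide
    · intro w hw
      rw [Finset.mem_filter] at hw ⊢
      refine ⟨Finset.mem_univ _, ?_⟩
      rw [hsum]
      have h2 := hw.2
      revert h2
      generalize (∑ i, w i) = s
      revert s
      decide
  have htot : (Finset.univ.filter fun w : Fin m → ZMod 2 => ∑ i, w i = 0).card
      + (Finset.univ.filter fun w : Fin m → ZMod 2 => ¬ (∑ i, w i = 0)).card = 2 ^ m := by
    rw [Finset.card_filter_add_card_filter_not]
    simp [Finset.card_univ]
  have h2 : 2 ^ m = 2 * 2 ^ (m - 1) := by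
    have hm := NeZero.pos m
    calc 2 ^ m = 2 ^ ((m - 1) + 1) := by rw [Nat.sub_add_cancel (NeZero.one_le)]
      _ = 2 * 2 ^ (m - 1) := by rw [pow_succ]; ring
  have key : 2 * (Finset.univ.filter fun w : Fin m → ZMod 2 => ∑ i, w i = 0).card
      = 2 * 2 ^ (m - 1) := by
    rw [two_mul]
    nth_rewrite 2 [hcards]
    rw [htot, h2]
  exact Nat.eq_of_mul_eq_mul_left (by norm_num) key

lemma zmod2_add_self' : ∀ a : ZMod 2, a + a = 0 := by decide
lemma zmod2_eq_of_add_eq_zero : ∀ {a b : ZMod 2}, a + b = 0 → a = b := by decide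

lemma image_cycle (m : ℕ) [NeZero m] :
    (Finset.univ.image fun y : Fin m → ZMod 2 => fun i => y i + y (i + 1)) =
      Finset.univ.filter fun w => ∑ i, w i = 0 := by
  ext w
  simp only [Finset.mem_image, Finset.mem_univ, true_and, Finset.mem_filter]
  constructor
  · rintro ⟨y, rfl⟩
    rw [Finset.sum_add_distrib]
    have : ∑ i : Fin m, y (i + 1) = ∑ i : Fin m, y i :=
      Fintype.sum_equiv (Equiv.addRight 1) _ _ (fun i => rfl)
    rw [this]
    exact zmod2_add_self' _
  · intro hw
    refine ⟨fun i => ∑ j ∈ Finset.univ.filter fun j => j < i, w j, ?_⟩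
    funext i
    by_cases hi : (i : ℕ) + 1 < m
    · have hv1 : ((i + 1 : Fin m) : ℕ) = (i : ℕ) + 1 := by
        have hm2 : 2 ≤ m := by omega
        have h1 : ((1 : Fin m) : ℕ) = 1 := by
          simp [Fin.val_one', Nat.mod_eq_of_lt hm2]
        rw [Fin.val_add, h1, Nat.mod_eq_of_lt hi]
      have hins : (Finset.univ.filter fun j : Fin m => j < i + 1)
          = insert i (Finset.univ.filter fun j => j < i) := by
        ext j
        simp only [Finset.mem_filter, Finset.mem_univ, true_and, Finset.mem_insert,
          Fin.lt_def, hv1, Fin.ext_iff]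
        omega
      beta_reduce
      rw [hins, Finset.sum_insert (by simp)]
      have goal2 : ∀ a b : ZMod 2, a + (b + a) = b := by decide
      exact goal2 _ _
    · have him : (i : ℕ) = m - 1 := by have := i.isLt; omega
      have hv0 : i + 1 = (0 : Fin m) := by
        rw [Fin.ext_iff, Fin.val_add, Fin.val_zero]
        have h1 : ((1 : Fin m) : ℕ) = 1 % m := Fin.val_one' m
        rw [h1, him]
        have hm := NeZero.pos m
        rcases Nat.eq_or_lt_of_le hm with h | h
        · simp [← h]
        · rw [Nat.mod_eq_of_lt h]
          simp [Nat.sub_add_cancel hm]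
      have hempty : (Finset.univ.filter fun j : Fin m => j < (0 : Fin m)) = ∅ := by
        ext j; simp [Fin.lt_def]
      have huniv : insert i (Finset.univ.filter fun j : Fin m => j < i) = Finset.univ := by
        ext j
        simp only [Finset.mem_insert, Finset.mem_filter, Finset.mem_univ, true_and,
          iff_true, Fin.lt_def, Fin.ext_iff, him]
        have := j.isLt; omega
      have hwi : w i = ∑ j ∈ Finset.univ.filter fun j : Fin m => j < i, w j := by
        apply zmod2_eq_of_add_eq_zero
        rw [← Finset.sum_insert (s := Finset.univ.filter fun j : Fin m => j < i)
          (by simp), huniv]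
        exact hw
      beta_reduce
      rw [hv0, hempty]
      simp [← hwi]

open Fin.NatCast in
lemma inj_case (m : ℕ) [NeZero m] (c : Fin m → Bool) (i0 : Fin m) (h0 : c i0 = false) :
    Function.Injective (fun y : Fin m → ZMod 2 => fun i => if c i then y i + y (i + 1) else y i) := by
  intro y y' h
  have h' : ∀ i, (if c i then y i + y (i + 1) else y i)
      = (if c i then y' i + y' (i + 1) else y' i) := fun i => congrFun h i
  have key : ∀ k : ℕ, y (i0 - (k : Fin m)) = y' (i0 - (k : Fin m)) := by
    intro k
    induction k with
    | zero =>
      have := h' i0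
      rw [h0] at this
      simpa using this
    | succ k ih =>
      have hcast : ((k + 1 : ℕ) : Fin m) = (k : Fin m) + 1 := by push_cast; ring
      have hi1 : i0 - ((k + 1 : ℕ) : Fin m) + 1 = i0 - (k : Fin m) := by
        rw [hcast]; abel
      have this1 := h' (i0 - ((k + 1 : ℕ) : Fin m))
      rcases Bool.eq_false_or_eq_true (c (i0 - ((k + 1 : ℕ) : Fin m))) with hc | hc
      · rw [if_pos hc, if_pos hc, hi1, ih] at this1
        exact add_right_cancel this1
      · rw [if_neg (hc ▸ Bool.false_ne_true), if_neg (hc ▸ Bool.false_ne_true)] at this1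
        exact this1
  funext j
  have := key ((i0 - j) : Fin m).val
  rwa [Fin.cast_val_eq_self, sub_sub_cancel] at this
theorem circuit_image_card (n m : ℕ) [NeZero m]
    (C : Fin m → (Fin n → Bool) → Bool) :
    let G : (Fin n → Bool) × (Fin m → ZMod 2) → (Fin n → Bool) × (Fin m → ZMod 2) :=
      fun xy => (xy.1, fun i => if C i xy.1 then xy.2 i + xy.2 (i + 1) else xy.2 i)
    let M := (Finset.univ.filter fun x : Fin n → Bool => ∀ i, C i x = true).card
    (Finset.univ.image G).card = 2 ^ (n + m) - 2 ^ (m - 1) * M ∧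
    (Function.Bijective G ↔ M = 0) := by
  intro G M
  set f : (Fin n → Bool) → (Fin m → ZMod 2) → (Fin m → ZMod 2) :=
    fun x y i => if C i x then y i + y (i + 1) else y i with hf
  have himg : Finset.univ.image G =
      Finset.univ.biUnion (fun x : Fin n → Bool =>
        (Finset.univ.image (f x)).image (fun w => (x, w))) := by
    ext ⟨x, w⟩
    simp only [Finset.mem_image, Finset.mem_biUnion, Finset.mem_univ, true_and,
      Prod.ext_iff, Prod.mk.injEq, G, f]
    constructor
    · rintro ⟨⟨a, b⟩, h1, h2⟩
      exact ⟨a, _, ⟨b, rfl⟩, h1, h2⟩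
    · rintro ⟨a, a1, ⟨b, hb⟩, h1, h2⟩
      exact ⟨(a, b), h1, hb.trans h2⟩
  have hdisj : ∀ x ∈ (Finset.univ : Finset (Fin n → Bool)), ∀ x' ∈ Finset.univ, x ≠ x' →
      Disjoint ((Finset.univ.image (f x)).image (fun w => (x, w)))
        ((Finset.univ.image (f x')).image (fun w => (x', w))) := by
    intro x _ x' _ hne
    rw [Finset.disjoint_left]
    rintro ⟨a, b⟩ ha hb
    simp only [Finset.mem_image, Prod.mk.injEq] at ha hb
    obtain ⟨_, _, h1, _⟩ := ha
    obtain ⟨_, _, h2, _⟩ := hb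
    exact hne (h1.trans h2.symm)
  have hcardsum : (Finset.univ.image G).card = ∑ x : Fin n → Bool, (Finset.univ.image (f x)).card := by
    rw [himg, Finset.card_biUnion hdisj]
    refine Finset.sum_congr rfl fun x _ => ?_
    exact Finset.card_image_of_injective _ (fun u v h => by simpa using h)
  have hcard : ∀ x : Fin n → Bool, (Finset.univ.image (f x)).card
      = if (∀ i, C i x = true) then 2 ^ (m - 1) else 2 ^ m := by
    intro x
    by_cases hx : ∀ i, C i x = true
    · rw [if_pos hx]
      have hfx : f x = fun y : Fin m → ZMod 2 => fun i => y i + y (i + 1) := by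
        funext y i; simp [hf, hx i]
      rw [hfx, image_cycle, card_sum_zero]
    · rw [if_neg hx]
      push_neg at hx
      obtain ⟨i0, hi0⟩ := hx
      have hi0' : C i0 x = false := by
        cases h : C i0 x
        · rfl
        · exact absurd h hi0
      have hinj := inj_case m (fun i => C i x) i0 hi0'
      rw [Finset.card_image_of_injective _ hinj, Finset.card_univ]
      simp [ZMod.card]
  have hMle : M ≤ 2 ^ n := by
    have := Finset.card_filter_le (Finset.univ : Finset (Fin n → Bool))
      (fun x => ∀ i, C i x = true)
    simpa [Finset.card_univ] using this
  have hMcompl : (Finset.univ.filter fun x : Fin n → Bool => ¬ ∀ i, C i x = true).card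
      = 2 ^ n - M := by
    have h := Finset.card_filter_add_card_filter_not
      (s := (Finset.univ : Finset (Fin n → Bool))) (p := fun x => ∀ i, C i x = true)
    have hu : (Finset.univ : Finset (Fin n → Bool)).card = 2 ^ n := by
      simp [Finset.card_univ]
    omega
  have hsum : ∑ x : Fin n → Bool, (Finset.univ.image (f x)).card
      = M * 2 ^ (m - 1) + (2 ^ n - M) * 2 ^ m := by
    rw [Finset.sum_congr rfl (fun x _ => hcard x), Finset.sum_ite,
      Finset.sum_const, Finset.sum_const, smul_eq_mul, smul_eq_mul, hMcompl]
  have harith : M * 2 ^ (m - 1) + (2 ^ n - M) * 2 ^ m = 2 ^ (n + m) - 2 ^ (m - 1) * M := by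
    obtain ⟨D, hD⟩ : ∃ D, 2 ^ n = M + D := ⟨2 ^ n - M, by omega⟩
    have h2m : 2 ^ m = 2 * 2 ^ (m - 1) := by
      have hm := NeZero.pos m
      calc 2 ^ m = 2 ^ ((m - 1) + 1) := by rw [Nat.sub_add_cancel hm]
        _ = 2 * 2 ^ (m - 1) := by rw [pow_succ]; ring
    have hnm : 2 ^ (n + m) = 2 ^ n * 2 ^ m := pow_add 2 n m
    rw [hnm, hD, h2m]
    have hsub : M + D - M = D := by omega
    rw [hsub]
    symm
    apply Nat.sub_eq_of_eq_add
    ring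
  have hpart1 : (Finset.univ.image G).card = 2 ^ (n + m) - 2 ^ (m - 1) * M := by
    rw [hcardsum, hsum, harith]
  refine ⟨hpart1, ?_⟩
  have hcardU : Fintype.card ((Fin n → Bool) × (Fin m → ZMod 2)) = 2 ^ (n + m) := by
    simp [ZMod.card, pow_add]
  constructor
  · intro hbij
    have hinj := hbij.injective
    have : (Finset.univ.image G).card = 2 ^ (n + m) := by
      rw [Finset.card_image_of_injective _ hinj, Finset.card_univ, hcardU]
    rw [hpart1] at this
    have hK : 0 < 2 ^ (m - 1) := Nat.pow_pos (by norm_num)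
    have hX : 0 < 2 ^ (n + m) := Nat.pow_pos (by norm_num)
    have hKM : 2 ^ (m - 1) * M = 0 := by
      generalize hP : 2 ^ (m - 1) * M = P at this
      generalize 2 ^ (n + m) = X at this hX
      omega
    rcases Nat.mul_eq_zero.mp hKM with h | h
    · omega
    · exact h
  · intro hM0
    have : (Finset.univ.image G).card = Fintype.card ((Fin n → Bool) × (Fin m → ZMod 2)) := by
      rw [hpart1, hM0, hcardU]; simp
    have huniv : Finset.univ.image G = Finset.univ := by
      exact Finset.eq_univ_of_card _ this
    have hsurj : Function.Surjective G := by
      intro z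
      have hz : z ∈ Finset.univ.image G := by rw [huniv]; exact Finset.mem_univ z
      obtain ⟨p, _, hp⟩ := Finset.mem_image.mp hz
      exact ⟨p, hp⟩
    exact Finite.surjective_iff_bijective.mp hsurj
end
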